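/- Let F be a CDF on [0,1] and let (M_t) be a sequence of random variables with M_{t+1} defined as a median of the (random) posterior CDF F_t, i.e., F_t(M_{t+1}) = 1/2 almost surely. Suppose that for every δ > 0 and ω > 0, P(|F_t(B+δ) - F_t(B-δ) - 1| < ω) → 1 as t → ∞, where B ∈ (δ, 1-δ) is the true bid. Then M_t converges to B in probability. -/
import Mathlib


open MeasureTheory Filter

theorem stmt5 {Ω : Type*} [MeasurableSpace Ω] (μ : Measure Ω) [IsProbabilityMeasure μ]
    (F : ℕ → Ω → ℝ → ℝ) (M : ℕ → Ω → ℝ) (b : ℝ) (hb : b ∈ Set.Ioo (0:ℝ) 1)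
    (hmono : ∀ t, ∀ᵐ ω ∂μ, Monotone (F t ω))
    (hrange : ∀ t, ∀ᵐ ω ∂μ, ∀ x, F t ω x ∈ Set.Icc (0:ℝ) 1)
    (hmed : ∀ t, ∀ᵐ ω ∂μ, F t ω (M (t+1) ω) = 1/2)
    (hconc : ∀ δ > 0, b ∈ Set.Ioo δ (1 - δ) → ∀ w > 0,
      Tendsto (fun t => μ {ω | |F t ω (b + δ) - F t ω (b - δ) - 1| < w}) atTop (nhds 1)) :
    ∀ δ > 0, Tendsto (fun t => μ {ω | |M t ω - b| < δ}) atTop (nhds 1) := by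
  intro δ hδ
  obtain ⟨hb0, hb1⟩ := hb
  set ε : ℝ := min δ (min b (1 - b)) / 2 with hεdef
  have hε0 : 0 < ε := by
    have : 0 < min δ (min b (1 - b)) := lt_min hδ (lt_min hb0 (by linarith))
    positivity
  have hεδ : ε < δ := by
    have h1 : min δ (min b (1 - b)) ≤ δ := min_le_left _ _
    simp only [hεdef]; linarith
  have hεb : b ∈ Set.Ioo ε (1 - ε) := by
    have h1 : min δ (min b (1 - b)) ≤ b := le_trans (min_le_right _ _) (min_le_left _ _)
    have h2 : min δ (min b (1 - b)) ≤ 1 - b := le_trans (min_le_right _ _) (min_le_right _ _)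
    constructor <;> simp only [hεdef] <;> linarith
  have key := hconc ε hε0 hεb (1/2) (by norm_num)
  rw [← tendsto_add_atTop_iff_nat 1]
  have main : ∀ t, μ {ω | |F t ω (b + ε) - F t ω (b - ε) - 1| < 1/2}
      ≤ μ {ω | |M (t + 1) ω - b| < δ} := by
    intro t
    have hG : ∀ᵐ ω ∂μ, Monotone (F t ω) ∧ (∀ x, F t ω x ∈ Set.Icc (0:ℝ) 1) ∧
        F t ω (M (t+1) ω) = 1/2 := (hmono t).and ((hrange t).and (hmed t))
    set N := {ω | ¬ (Monotone (F t ω) ∧ (∀ x, F t ω x ∈ Set.Icc (0:ℝ) 1) ∧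
        F t ω (M (t+1) ω) = 1/2)} with hN
    have hNnull : μ N = 0 := hG
    set A := {ω | |F t ω (b + ε) - F t ω (b - ε) - 1| < 1/2} with hA
    have hsub : A ∩ Nᶜ ⊆ {ω | |M (t + 1) ω - b| < δ} := by
      rintro ω ⟨hAω, hGω⟩
      simp only [hN, Set.mem_compl_iff, Set.mem_setOf_eq, not_not] at hGω
      obtain ⟨hm, hr, hmed'⟩ := hGω
      simp only [hA, Set.mem_setOf_eq, abs_lt] at hAω
      have h1 : F t ω (b + ε) ≤ 1 := (hr (b + ε)).2
      have h2 : 0 ≤ F t ω (b - ε) := (hr (b - ε)).1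
      have hlo : F t ω (b - ε) < 1/2 := by linarith [hAω.1]
      have hhi : 1/2 < F t ω (b + ε) := by linarith [hAω.1]
      have hM1 : b - ε < M (t+1) ω := by
        by_contra h
        push_neg at h
        have := hm h
        linarith [hmed' ▸ this]
      have hM2 : M (t+1) ω < b + ε := by
        by_contra h
        push_neg at h
        have := hm h
        linarith [hmed' ▸ this]
      simp only [Set.mem_setOf_eq, abs_lt]
      constructor <;> linarith
    calc μ A ≤ μ (A ∩ Nᶜ) + μ N := by
          refine le_trans (measure_mono ?_) (measure_union_le _ _)
          intro ω hω
          by_cases hω' : ω ∈ N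
          · exact Or.inr hω'
          · exact Or.inl ⟨hω, hω'⟩
      _ = μ (A ∩ Nᶜ) := by rw [hNnull, add_zero]
      _ ≤ _ := measure_mono hsub
  refine tendsto_of_tendsto_of_tendsto_of_le_of_le key tendsto_const_nhds main ?_
  exact fun t => prob_le_one
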